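/- (Discrete solvability implies discrete norm equivalence.) Let F be the N×N unitary DFT matrix and I ⊆ {1,...,N}. Suppose there is a constant C such that for every x ∈ ℂ^N supported on I there exists r ∈ ℂ^N supported on the complement of I with ‖F(x+r)‖_{ℓ^∞} ≤ (C/√N)‖x‖_{ℓ²}. Then every b ∈ ℂ^N supported on I satisfies ‖b‖_{ℓ²} ≤ (C/√N)‖Fb‖_{ℓ¹}. -/

import Mathlib

/-- The normalized inverse DFT matrix. -/
noncomputable def dftMatrix (N : ℕ) : Matrix (Fin N) (Fin N) ℂ :=
  fun j k => (1 / Real.sqrt N) *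
    Complex.exp (-2 * Real.pi * Complex.I * (j : ℕ) * (k : ℕ) / N)

lemma sum_exp_eq_zero (N : ℕ) (hN : 0 < N) (m : ℤ) (hm0 : m ≠ 0) (hm : m.natAbs < N) :
    ∑ j : Fin N, Complex.exp (2 * Real.pi * Complex.I * m * j / N) = 0 := by
  have hNC : (N : ℂ) ≠ 0 := Nat.cast_ne_zero.mpr hN.ne'
  set ζ := Complex.exp (2 * Real.pi * Complex.I * m / N) with hζdef
  have hz : ∀ j : Fin N, Complex.exp (2 * Real.pi * Complex.I * m * j / N) = ζ ^ (j : ℕ) := by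
    intro j
    rw [hζdef, ← Complex.exp_nat_mul]
    congr 1
    field_simp
  have hζN : ζ ^ N = 1 := by
    rw [hζdef, ← Complex.exp_nat_mul]
    have h1 : (N : ℂ) * (2 * Real.pi * Complex.I * m / N) = m * (2 * Real.pi * Complex.I) := by
      field_simp
    rw [h1, Complex.exp_int_mul_two_pi_mul_I]
  have hζ1 : ζ ≠ 1 := by
    intro h
    rw [hζdef, Complex.exp_eq_one_iff] at h
    obtain ⟨n, hn⟩ := h
    have hπ : (Real.pi:ℂ) ≠ 0 := Complex.ofReal_ne_zero.mpr Real.pi_ne_zero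
    have h2 : (m : ℂ) = n * N := by
      field_simp at hn
      have h2' : (2*(Real.pi:ℂ)*Complex.I) * m = (2*(Real.pi:ℂ)*Complex.I) * (n*N) := by
        linear_combination (2*(Real.pi:ℂ)*Complex.I) * hn
      have hne : (2*(Real.pi:ℂ)*Complex.I) ≠ 0 := by simp [hπ, Complex.I_ne_zero]
      exact mul_left_cancel₀ hne h2'
    have h3 : m = n * N := by exact_mod_cast h2
    have hn0 : n ≠ 0 := by rintro rfl; simp at h3; exact hm0 h3
    have h4 : N ≤ m.natAbs := by
      rw [h3, Int.natAbs_mul, Int.natAbs_natCast]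
      have : 1 ≤ n.natAbs := Int.natAbs_pos.mpr hn0
      calc N = 1 * N := (one_mul N).symm
        _ ≤ n.natAbs * N := Nat.mul_le_mul_right N this
    omega
  simp_rw [hz]
  rw [Fin.sum_univ_eq_sum_range (fun j => ζ ^ j), geom_sum_eq hζ1, hζN]
  simp

lemma dft_ortho (N : ℕ) (hN : 0 < N) (i k : Fin N) :
    ∑ j, (starRingEnd ℂ) (dftMatrix N j i) * dftMatrix N j k
      = if i = k then 1 else 0 := by
  have hNC : (N : ℂ) ≠ 0 := Nat.cast_ne_zero.mpr hN.ne'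
  have hNR : (0:ℝ) < N := Nat.cast_pos.mpr hN
  set m : ℤ := (i : ℕ) - (k : ℕ) with hm
  have hterm : ∀ j : Fin N, (starRingEnd ℂ) (dftMatrix N j i) * dftMatrix N j k
      = (1 / (N:ℂ)) * Complex.exp (2 * Real.pi * Complex.I * m * j / N) := by
    intro j
    unfold dftMatrix
    rw [map_mul, ← Complex.exp_conj]
    have hconj : (starRingEnd ℂ) (-2 * Real.pi * Complex.I * ((j:ℕ):ℂ) * ((i:ℕ):ℂ) / N)
        = 2 * Real.pi * Complex.I * ((j:ℕ):ℂ) * ((i:ℕ):ℂ) / N := by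
      simp [map_div₀, Complex.conj_I, map_ofNat]
    rw [hconj, map_div₀, map_one, Complex.conj_ofReal]
    have hcc : (1 / ((Real.sqrt N : ℝ) : ℂ)) * (1 / ((Real.sqrt N : ℝ) : ℂ)) = 1 / (N:ℂ) := by
      rw [div_mul_div_comm, one_mul, ← Complex.ofReal_mul, Real.mul_self_sqrt hNR.le]
      push_cast
      ring
    rw [mul_mul_mul_comm, hcc, ← Complex.exp_add]
    congr 1
    push_cast [hm]
    field_simp
    ring
  simp_rw [hterm]
  by_cases h : i = k
  · subst h
    have hm0 : m = 0 := by simp [hm]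
    simp [hm0, Finset.card_univ]
    field_simp
  · have hm0 : m ≠ 0 := by
      simp [hm, sub_eq_zero]
      intro hik
      exact h (Fin.ext hik)
    have hma : m.natAbs < N := by
      have h1 := i.isLt
      have h2 := k.isLt
      omega
    rw [← Finset.mul_sum, sum_exp_eq_zero N hN m hm0 hma, mul_zero]
    simp [h]

lemma dft_parseval (N : ℕ) (hN : 0 < N) (b y : Fin N → ℂ) :
    ∑ j, (starRingEnd ℂ) ((dftMatrix N).mulVec b j) * (dftMatrix N).mulVec y j
      = ∑ i, (starRingEnd ℂ) (b i) * y i := by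
  have hstep : ∀ j, (starRingEnd ℂ) ((dftMatrix N).mulVec b j) * (dftMatrix N).mulVec y j
      = ∑ i, ∑ k, ((starRingEnd ℂ) (dftMatrix N j i) * dftMatrix N j k)
          * ((starRingEnd ℂ) (b i) * y k) := by
    intro j
    simp only [Matrix.mulVec, dotProduct, map_sum, map_mul, Finset.sum_mul_sum]
    apply Finset.sum_congr rfl
    intro i _
    apply Finset.sum_congr rfl
    intro k _
    ring
  simp_rw [hstep]
  rw [Finset.sum_comm]
  apply Finset.sum_congr rfl
  intro i _
  rw [Finset.sum_comm]
  have h2 : ∀ k, ∑ j, ((starRingEnd ℂ) (dftMatrix N j i) * dftMatrix N j k)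
      * ((starRingEnd ℂ) (b i) * y k)
      = (if i = k then 1 else 0) * ((starRingEnd ℂ) (b i) * y k) := by
    intro k
    rw [← Finset.sum_mul, dft_ortho N hN i k]
  simp_rw [h2]
  simp [Finset.sum_ite_eq]

/-- Discrete solvability implies the discrete norm equivalence: if every `x` supported
on `I` admits a compensation vector `r` supported on `Iᶜ` with
`‖F(x+r)‖_∞ ≤ (C/√N)‖x‖₂`, then every `b` supported on `I` satisfies
`‖b‖₂ ≤ (C/√N)‖Fb‖₁`. -/
theorem stmt19 (N : ℕ) (hN : 0 < N) (I : Finset (Fin N)) (C : ℝ)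
    (hsolv : ∀ x : Fin N → ℂ, (∀ i ∉ I, x i = 0) →
      ∃ r : Fin N → ℂ, (∀ i ∈ I, r i = 0) ∧
        ∀ j, ‖(dftMatrix N).mulVec (x + r) j‖
          ≤ (C / Real.sqrt N) * Real.sqrt (∑ i, ‖x i‖ ^ 2)) :
    ∀ b : Fin N → ℂ, (∀ i ∉ I, b i = 0) →
      Real.sqrt (∑ i, ‖b i‖ ^ 2)
        ≤ (C / Real.sqrt N) * ∑ j, ‖(dftMatrix N).mulVec b j‖ := by
  intro b hb
  obtain ⟨r, hr, hbound⟩ := hsolv b hb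
  set S : ℝ := ∑ i, ‖b i‖ ^ 2 with hSdef
  have hS0 : 0 ≤ S := Finset.sum_nonneg (fun i _ => sq_nonneg _)
  set g : Fin N → ℂ := (dftMatrix N).mulVec b with hgdef
  set G : Fin N → ℂ := (dftMatrix N).mulVec (b + r) with hGdef
  have hpars : ∑ j, (starRingEnd ℂ) (g j) * G j = (S : ℂ) := by
    rw [hgdef, hGdef, dft_parseval N hN b (b + r)]
    have hterm : ∀ i ∈ Finset.univ, (starRingEnd ℂ) (b i) * (b + r) i
        = ((‖b i‖ ^ 2 : ℝ) : ℂ) := by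
      intro i _
      by_cases hi : i ∈ I
      · simp only [Pi.add_apply, hr i hi, add_zero]
        rw [mul_comm, Complex.mul_conj, Complex.normSq_eq_norm_sq]
        try push_cast
        try ring
      · simp [hb i hi]
    rw [Finset.sum_congr rfl hterm, hSdef]
    push_cast
    try ring
  have key : S ≤ (∑ j, ‖g j‖) * ((C / Real.sqrt N) * Real.sqrt S) := by
    calc S = ‖(S : ℂ)‖ := by rw [Complex.norm_real, Real.norm_eq_abs, abs_of_nonneg hS0]
      _ = ‖∑ j, (starRingEnd ℂ) (g j) * G j‖ := by rw [hpars]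
      _ ≤ ∑ j, ‖(starRingEnd ℂ) (g j) * G j‖ := norm_sum_le _ _
      _ = ∑ j, ‖g j‖ * ‖G j‖ := by simp [norm_mul]
      _ ≤ ∑ j, ‖g j‖ * ((C / Real.sqrt N) * Real.sqrt S) := by
          apply Finset.sum_le_sum
          intro j _
          exact mul_le_mul_of_nonneg_left (hbound j) (norm_nonneg _)
      _ = (∑ j, ‖g j‖) * ((C / Real.sqrt N) * Real.sqrt S) := by rw [Finset.sum_mul]
  by_cases hzero : Real.sqrt S = 0
  · have hSz : S = 0 := by
      have h : S ≤ 0 := Real.sqrt_eq_zero'.mp hzero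
      linarith
    have hSz' : ∑ i, ‖b i‖ ^ 2 = (0:ℝ) := by rw [← hSdef]; exact hSz
    have hbz : ∀ i, b i = 0 := by
      intro i
      have h' := (Finset.sum_eq_zero_iff_of_nonneg
        (fun i (_ : i ∈ Finset.univ) => sq_nonneg ‖b i‖)).mp hSz' i (Finset.mem_univ i)
      have : ‖b i‖ = 0 := by
        have := sq_eq_zero_iff.mp h'
        exact this
      simpa using this
    have hb0 : b = 0 := funext hbz
    rw [hzero]
    have : g = 0 := by rw [hgdef, hb0, Matrix.mulVec_zero]
    rw [hgdef] at this
    rw [show (∑ j, ‖(dftMatrix N).mulVec b j‖) = 0 by simp [this]]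
    simp
  · have hpos : 0 < Real.sqrt S := lt_of_le_of_ne (Real.sqrt_nonneg S) (Ne.symm hzero)
    have hmul : Real.sqrt S * Real.sqrt S
        ≤ ((C / Real.sqrt N) * ∑ j, ‖g j‖) * Real.sqrt S := by
      rw [Real.mul_self_sqrt hS0]
      calc S ≤ (∑ j, ‖g j‖) * ((C / Real.sqrt N) * Real.sqrt S) := key
        _ = ((C / Real.sqrt N) * ∑ j, ‖g j‖) * Real.sqrt S := by ring
    exact le_of_mul_le_mul_right hmul hpos
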